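/- Let α ∈ (1/2, 1), λ > 2α/(1 − α), and C > 0. Let u : [0, ∞) → [0, ∞) be measurable and bounded, and suppose there exist constants K > 0 and T > 0 such that u(τ) ≤ K τ^{−2λ} for all τ ≥ T. If a constant c ≥ 0 satisfies c ≤ 3 u(t) + C (∫_0^t (t − τ)^{α−1} √(u(τ)) dτ)^2 + C ∫_0^t (t − τ)^{2α−2} u(τ) dτ for all t > 0, then c = 0. -/

import Mathlib

open MeasureTheory intervalIntegral Filter Real

/-- Key deterministic bound: if `v` is nonnegative, bounded by `B` on `[0,∞)` and by
`D τ^(−m)` for `τ ≥ T`, then for `t ≥ 2T` the convolution integral with the kernel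
`(t−τ)^β` (with `−1 < β < 0`) is bounded by an explicit expression tending to `0`. -/
lemma key_bound (β m B D T t : ℝ) (hβ : -1 < β) (hβ0 : β < 0) (hm : 1 < m)
    (hB : 0 ≤ B) (hD : 0 ≤ D) (hT : 0 < T)
    (v : ℝ → ℝ) (hv : Measurable v)
    (hv0 : ∀ τ : ℝ, 0 ≤ τ → 0 ≤ v τ)
    (hvB : ∀ τ : ℝ, 0 ≤ τ → v τ ≤ B)
    (hvD : ∀ τ : ℝ, T ≤ τ → v τ ≤ D * τ ^ (-m))
    (ht : 2 * T ≤ t) :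
    ∫ τ in (0:ℝ)..t, (t - τ) ^ β * v τ ≤
      (t/2) ^ β * B * T + (t/2) ^ β * (D * T ^ (1-m) / (m-1)) +
        D * (t/2) ^ (β+1-m) / (β+1) := by
  have htpos : 0 < t := lt_of_lt_of_le (by linarith) ht
  have hT2 : T ≤ t/2 := by linarith
  have ht2 : 0 < t/2 := by linarith
  -- integrability of the kernel on [0, t]
  have hker : IntervalIntegrable (fun τ => (t - τ) ^ β) volume 0 t := by
    have h := (intervalIntegral.intervalIntegrable_rpow' (a := 0) (b := t) hβ).comp_sub_left t
    simpa using h.symm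
  -- integrability of the product on [0, t]
  have hprod : IntervalIntegrable (fun τ => (t - τ) ^ β * v τ) volume 0 t := by
    rw [intervalIntegrable_iff] at hker ⊢
    have hbound : ∀ᵐ x ∂(volume.restrict (Set.uIoc (0:ℝ) t)), ‖v x‖ ≤ B := by
      rw [Set.uIoc_of_le htpos.le]
      refine (ae_restrict_iff' measurableSet_Ioc).2 (Filter.Eventually.of_forall fun x hx => ?_)
      rw [Real.norm_of_nonneg (hv0 x hx.1.le)]
      exact hvB x hx.1.le
    have h := MeasureTheory.Integrable.bdd_mul hker hv.aestronglyMeasurable hbound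
    have heq : (fun τ => (t - τ) ^ β * v τ) = fun τ => v τ * (t - τ) ^ β := by
      funext τ; ring
    rw [heq]
    exact h
  -- sub-interval integrabilities
  have hIcc1 : Set.uIcc (0:ℝ) T ⊆ Set.uIcc (0:ℝ) t := by
    rw [Set.uIcc_of_le hT.le, Set.uIcc_of_le htpos.le]
    exact Set.Icc_subset_Icc le_rfl (by linarith)
  have hIcc2 : Set.uIcc T (t/2) ⊆ Set.uIcc (0:ℝ) t := by
    rw [Set.uIcc_of_le hT2, Set.uIcc_of_le htpos.le]
    exact Set.Icc_subset_Icc hT.le (by linarith)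
  have hIcc3 : Set.uIcc (t/2) t ⊆ Set.uIcc (0:ℝ) t := by
    rw [Set.uIcc_of_le (by linarith : t/2 ≤ t), Set.uIcc_of_le htpos.le]
    exact Set.Icc_subset_Icc (by linarith) le_rfl
  have hint1 := hprod.mono_set hIcc1
  have hint2 := hprod.mono_set hIcc2
  have hint3 := hprod.mono_set hIcc3
  have hker3 := hker.mono_set hIcc3
  -- splitting
  have hsplit : ∫ τ in (0:ℝ)..t, (t - τ) ^ β * v τ =
      (∫ τ in (0:ℝ)..T, (t - τ) ^ β * v τ) + (∫ τ in T..(t/2), (t - τ) ^ β * v τ) +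
        (∫ τ in (t/2)..t, (t - τ) ^ β * v τ) := by
    rw [add_assoc, integral_add_adjacent_intervals hint2 hint3,
      integral_add_adjacent_intervals hint1 (hint2.trans hint3)]
  -- piece A : [0, T]
  have hA : ∫ τ in (0:ℝ)..T, (t - τ) ^ β * v τ ≤ (t/2) ^ β * B * T := by
    calc ∫ τ in (0:ℝ)..T, (t - τ) ^ β * v τ
        ≤ ∫ _τ in (0:ℝ)..T, (t/2) ^ β * B := by
          refine integral_mono_on hT.le hint1 intervalIntegrable_const fun τ hτ => ?_
          have h1 : (t - τ) ^ β ≤ (t/2) ^ β :=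
            Real.rpow_le_rpow_of_nonpos ht2 (by linarith [hτ.2]) hβ0.le
          exact mul_le_mul h1 (hvB τ hτ.1) (hv0 τ hτ.1) (Real.rpow_nonneg ht2.le β)
      _ = (t/2) ^ β * B * T := by
          rw [intervalIntegral.integral_const, smul_eq_mul]
          ring
  -- piece B : [T, t/2]
  have hBB : ∫ τ in T..(t/2), (t - τ) ^ β * v τ ≤ (t/2) ^ β * (D * T ^ (1-m) / (m-1)) := by
    have hgint : IntervalIntegrable (fun τ => (t/2) ^ β * (D * τ ^ (-m))) volume T (t/2) := by
      apply ContinuousOn.intervalIntegrable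
      refine continuousOn_const.mul (continuousOn_const.mul ?_)
      refine ContinuousOn.rpow_const continuousOn_id fun x hx => Or.inl ?_
      rw [Set.uIcc_of_le hT2] at hx
      exact ne_of_gt (lt_of_lt_of_le hT hx.1)
    have hrint : ∫ τ in T..(t/2), τ ^ (-m) = ((t/2) ^ (-m+1) - T ^ (-m+1)) / (-m+1) := by
      refine integral_rpow (Or.inr ⟨?_, ?_⟩)
      · intro hh
        have hm1 : m = 1 := by linarith
        linarith
      · rw [Set.uIcc_of_le hT2]
        intro h
        exact absurd h.1 (not_le.2 hT)
    calc ∫ τ in T..(t/2), (t - τ) ^ β * v τ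
        ≤ ∫ τ in T..(t/2), (t/2) ^ β * (D * τ ^ (-m)) := by
          refine integral_mono_on hT2 hint2 hgint fun τ hτ => ?_
          have h1 : (t - τ) ^ β ≤ (t/2) ^ β :=
            Real.rpow_le_rpow_of_nonpos ht2 (by linarith [hτ.2]) hβ0.le
          exact mul_le_mul h1 (hvD τ hτ.1) (hv0 τ (le_trans hT.le hτ.1))
            (Real.rpow_nonneg ht2.le β)
      _ = (t/2) ^ β * (D * (((t/2) ^ (-m+1) - T ^ (-m+1)) / (-m+1))) := by
          rw [intervalIntegral.integral_const_mul, intervalIntegral.integral_const_mul, hrint]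
      _ ≤ (t/2) ^ β * (D * (T ^ (1-m) / (m-1))) := by
          refine mul_le_mul_of_nonneg_left (mul_le_mul_of_nonneg_left ?_ hD)
            (Real.rpow_nonneg ht2.le β)
          have hX : 0 ≤ (t/2) ^ (1-m) := Real.rpow_nonneg ht2.le _
          have hmm : (-m+1 : ℝ) = 1 - m := by ring
          rw [hmm]
          have h1m : (1 - m : ℝ) < 0 := by linarith
          rw [div_le_iff_of_neg h1m]
          have hm1 : (m - 1 : ℝ) ≠ 0 := ne_of_gt (by linarith)
          have hkey : T ^ (1-m) / (m-1) * (1-m) = -T ^ (1-m) := by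
            field_simp
            ring
          rw [hkey]
          linarith
      _ = (t/2) ^ β * (D * T ^ (1-m) / (m-1)) := by ring
  -- piece C : [t/2, t]
  have hCC : ∫ τ in (t/2)..t, (t - τ) ^ β * v τ ≤ D * (t/2) ^ (β+1-m) / (β+1) := by
    have hgint : IntervalIntegrable (fun τ => (t - τ) ^ β * (D * (t/2) ^ (-m)))
        volume (t/2) t := hker3.mul_const _
    have hcomp : ∫ τ in (t/2)..t, (t - τ) ^ β = ∫ x in (0:ℝ)..(t/2), x ^ β := by
      rw [intervalIntegral.integral_comp_sub_left (fun x => x ^ β) t,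
        show t - t/2 = t/2 by ring, show t - t = 0 by ring]
    calc ∫ τ in (t/2)..t, (t - τ) ^ β * v τ
        ≤ ∫ τ in (t/2)..t, (t - τ) ^ β * (D * (t/2) ^ (-m)) := by
          refine integral_mono_on (by linarith) hint3 hgint fun τ hτ => ?_
          refine mul_le_mul_of_nonneg_left ?_ (Real.rpow_nonneg (by linarith [hτ.2]) β)
          have h2 : v τ ≤ D * τ ^ (-m) := hvD τ (le_trans hT2 hτ.1)
          refine le_trans h2 (mul_le_mul_of_nonneg_left ?_ hD)
          exact Real.rpow_le_rpow_of_nonpos ht2 hτ.1 (by linarith)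
      _ = (∫ τ in (t/2)..t, (t - τ) ^ β) * (D * (t/2) ^ (-m)) := integral_mul_const _ _
      _ = D * (t/2) ^ (β+1-m) / (β+1) := by
          have hxy : (t/2 : ℝ) ^ (β+1-m) = (t/2) ^ (β+1) * (t/2) ^ (-m) := by
            rw [← Real.rpow_add ht2]
            congr 1
          rw [hcomp, integral_rpow (Or.inl hβ),
            Real.zero_rpow (by linarith : β + 1 ≠ 0), hxy]
          ring
  rw [hsplit]
  exact add_le_add (add_le_add hA hBB) hCC

/-- Deterministic skeleton of the asymptotic-separation lower bound: if `u : [0,∞) → [0,∞)` is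
measurable, bounded and `u(τ) ≤ K τ^(−2l)` for `τ ≥ T` with `l > 2α/(1−α)`, and a constant
`c ≥ 0` satisfies
`c ≤ 3 u(t) + C (∫_0^t (t − τ)^(α−1) √(u(τ)) dτ)² + C ∫_0^t (t − τ)^(2α−2) u(τ) dτ`
for all `t > 0`, then `c = 0`. -/
theorem separation_skeleton (α l C : ℝ) (hα : α ∈ Set.Ioo (1 / 2 : ℝ) 1)
    (hl : 2 * α / (1 - α) < l) (hC : 0 < C)
    (u : ℝ → ℝ) (hmeas : Measurable u)
    (hnonneg : ∀ τ : ℝ, 0 ≤ τ → 0 ≤ u τ)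
    (hbdd : ∃ M : ℝ, ∀ τ : ℝ, 0 ≤ τ → u τ ≤ M)
    (K T : ℝ) (hK : 0 < K) (hT : 0 < T)
    (hdecay : ∀ τ : ℝ, T ≤ τ → u τ ≤ K * τ ^ (-(2 * l)))
    (c : ℝ) (hc : 0 ≤ c)
    (hineq : ∀ t : ℝ, 0 < t →
      c ≤ 3 * u t + C * (∫ τ in (0:ℝ)..t, (t - τ) ^ (α - 1) * Real.sqrt (u τ)) ^ 2 +
            C * ∫ τ in (0:ℝ)..t, (t - τ) ^ (2 * α - 2) * u τ) :
    c = 0 := by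
  obtain ⟨M, hM⟩ := hbdd
  obtain ⟨hα1, hα2⟩ := hα
  set M' : ℝ := max M 0 with hM'def
  have hM'0 : 0 ≤ M' := le_max_right _ _
  have hM' : ∀ τ : ℝ, 0 ≤ τ → u τ ≤ M' := fun τ hτ => le_trans (hM τ hτ) (le_max_left _ _)
  have h1α : 0 < 1 - α := by linarith
  have hl2 : 2 < l := by
    have h2 : (2:ℝ) < 2 * α / (1 - α) := by
      rw [lt_div_iff₀ h1α]
      linarith
    linarith
  -- decay estimate for the square root
  have hsqrtD : ∀ τ : ℝ, T ≤ τ → Real.sqrt (u τ) ≤ Real.sqrt K * τ ^ (-l) := by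
    intro τ hτ
    have hτpos : 0 < τ := lt_of_lt_of_le hT hτ
    have h2 : τ ^ (-(2*l)) = (τ ^ (-l)) ^ (2:ℕ) := by
      rw [← Real.rpow_natCast (τ ^ (-l)) 2, ← Real.rpow_mul hτpos.le]
      norm_num
      ring_nf
    calc Real.sqrt (u τ) ≤ Real.sqrt (K * τ ^ (-(2*l))) := Real.sqrt_le_sqrt (hdecay τ hτ)
      _ = Real.sqrt K * τ ^ (-l) := by
          rw [Real.sqrt_mul hK.le, h2, Real.sqrt_sq (Real.rpow_nonneg hτpos.le _)]
  -- key bounds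
  have hkey1 : ∀ t : ℝ, 2 * T ≤ t →
      ∫ τ in (0:ℝ)..t, (t - τ) ^ (α - 1) * Real.sqrt (u τ) ≤
        (t/2) ^ (α-1) * Real.sqrt M' * T +
          (t/2) ^ (α-1) * (Real.sqrt K * T ^ (1-l) / (l-1)) +
            Real.sqrt K * (t/2) ^ (α-1+1-l) / (α-1+1) := by
    intro t ht
    exact key_bound (α-1) l (Real.sqrt M') (Real.sqrt K) T t (by linarith) (by linarith)
      (by linarith) (Real.sqrt_nonneg _) (Real.sqrt_nonneg _) hT
      (fun τ => Real.sqrt (u τ)) (Real.continuous_sqrt.measurable.comp hmeas)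
      (fun τ _ => Real.sqrt_nonneg _)
      (fun τ hτ => Real.sqrt_le_sqrt (hM' τ hτ))
      hsqrtD ht
  have hkey2 : ∀ t : ℝ, 2 * T ≤ t →
      ∫ τ in (0:ℝ)..t, (t - τ) ^ (2*α - 2) * u τ ≤
        (t/2) ^ (2*α-2) * M' * T +
          (t/2) ^ (2*α-2) * (K * T ^ (1-2*l) / (2*l-1)) +
            K * (t/2) ^ (2*α-2+1-2*l) / (2*α-2+1) := by
    intro t ht
    exact key_bound (2*α-2) (2*l) M' K T t (by linarith) (by linarith)
      (by linarith) hM'0 hK.le hT u hmeas hnonneg hM' hdecay ht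
  -- the dominating function
  set F : ℝ → ℝ := fun t =>
    3 * (K * t ^ (-(2*l))) +
      C * ((t/2) ^ (α-1) * Real.sqrt M' * T +
        (t/2) ^ (α-1) * (Real.sqrt K * T ^ (1-l) / (l-1)) +
          Real.sqrt K * (t/2) ^ (α-1+1-l) / (α-1+1)) ^ 2 +
      C * ((t/2) ^ (2*α-2) * M' * T +
        (t/2) ^ (2*α-2) * (K * T ^ (1-2*l) / (2*l-1)) +
          K * (t/2) ^ (2*α-2+1-2*l) / (2*α-2+1)) with hFdef
  have hmain : ∀ t : ℝ, 2 * T ≤ t → c ≤ F t := by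
    intro t ht
    have htpos : 0 < t := lt_of_lt_of_le (by linarith) ht
    have hI1nonneg : 0 ≤ ∫ τ in (0:ℝ)..t, (t - τ) ^ (α - 1) * Real.sqrt (u τ) := by
      refine intervalIntegral.integral_nonneg htpos.le fun τ hτ => ?_
      exact mul_nonneg (Real.rpow_nonneg (by linarith [hτ.2]) _) (Real.sqrt_nonneg _)
    have h1 := hkey1 t ht
    have h2 := hkey2 t ht
    have hut : u t ≤ K * t ^ (-(2*l)) := hdecay t (by linarith)
    refine le_trans (hineq t htpos) ?_
    rw [hFdef]
    refine add_le_add (add_le_add (by linarith) ?_) ?_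
    · exact mul_le_mul_of_nonneg_left (pow_le_pow_left₀ hI1nonneg h1 2) hC.le
    · exact mul_le_mul_of_nonneg_left h2 hC.le
  -- the dominating function tends to 0
  have hhalf : ∀ β : ℝ, β < 0 → Tendsto (fun t : ℝ => (t/2) ^ β) atTop (nhds 0) := by
    intro β hβ
    have h1 : Tendsto (fun t : ℝ => t/2) atTop atTop :=
      tendsto_id.atTop_div_const (by norm_num)
    have h2 := (tendsto_rpow_neg_atTop (show 0 < -β by linarith)).comp h1
    simpa [Function.comp_def] using h2
  have hβ1 : α - 1 < 0 := by linarith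
  have hβ1' : α - 1 + 1 - l < 0 := by linarith
  have hβ2 : 2*α - 2 < 0 := by linarith
  have hβ2' : 2*α - 2 + 1 - 2*l < 0 := by linarith
  have hFlim : Tendsto F atTop (nhds 0) := by
    have h0 : Tendsto (fun t : ℝ => t ^ (-(2*l))) atTop (nhds 0) :=
      tendsto_rpow_neg_atTop (by linarith)
    have ht1 := (h0.const_mul K).const_mul (3:ℝ)
    have he1 := ((((hhalf (α-1) hβ1).mul_const (Real.sqrt M')).mul_const T).add
      ((hhalf (α-1) hβ1).mul_const (Real.sqrt K * T ^ (1-l) / (l-1)))).add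
        (((hhalf (α-1+1-l) hβ1').const_mul (Real.sqrt K)).div_const (α-1+1))
    have he2 := ((((hhalf (2*α-2) hβ2).mul_const M').mul_const T).add
      ((hhalf (2*α-2) hβ2).mul_const (K * T ^ (1-2*l) / (2*l-1)))).add
        (((hhalf (2*α-2+1-2*l) hβ2').const_mul K).div_const (2*α-2+1))
    have htot := (ht1.add ((he1.pow 2).const_mul C)).add (he2.const_mul C)
    have hV : (3 * (K * 0) +
        C * (0 * Real.sqrt M' * T + 0 * (Real.sqrt K * T ^ (1-l) / (l-1)) +
          Real.sqrt K * 0 / (α-1+1)) ^ 2 +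
        C * (0 * M' * T + 0 * (K * T ^ (1-2*l) / (2*l-1)) + K * 0 / (2*α-2+1))) = (0:ℝ) := by
      norm_num
    rw [hFdef]
    rw [hV] at htot
    exact htot
  have hc0 : c ≤ 0 := by
    refine ge_of_tendsto hFlim ?_
    filter_upwards [eventually_ge_atTop (2*T)] with t ht
    exact hmain t ht
  linarith
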